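/- For every α with 0 < α ≤ 1, the inequality 4 α^α / (α+1)^{α+1} ≥ 1 holds, with equality if and only if α = 1. Consequently the Lin surprisal I*(α) = (1/2)·log₂( 4 α^α / (α+1)^{α+1} ) is nonnegative on (0,1] and vanishes exactly at α = 1. -/

import Mathlib

private noncomputable def gLin : ℝ → ℝ := fun x => 2 * Real.log 2 + x * Real.log x - (x + 1) * Real.log (x + 1)

private lemma gLin_hasDeriv {x : ℝ} (hx : 0 < x) :
    HasDerivAt gLin (Real.log x - Real.log (x + 1)) x := by
  have h1 : HasDerivAt (fun y : ℝ => y * Real.log y) (Real.log x + 1) x :=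
    Real.hasDerivAt_mul_log (ne_of_gt hx)
  have h2 : HasDerivAt (fun y : ℝ => (y + 1) * Real.log (y + 1)) (Real.log (x + 1) + 1) x := by
    have := (Real.hasDerivAt_mul_log (by linarith : x + 1 ≠ 0)).comp x
      ((hasDerivAt_id x).add_const 1)
    exact this.congr_deriv (by ring)
  have := ((hasDerivAt_const x (2 * Real.log 2)).add h1).sub h2
  exact this.congr_deriv (by ring)

private lemma gLin_anti : StrictAntiOn gLin (Set.Ioi 0) := by
  apply StrictAntiOn.mono ?_ (le_refl _)
  apply strictAntiOn_of_deriv_neg (convex_Ioi 0)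
  · exact fun x hx => ((gLin_hasDeriv hx).continuousAt).continuousWithinAt
  · intro x hx
    rw [interior_Ioi] at hx
    rw [(gLin_hasDeriv hx).deriv]
    have := Real.log_lt_log hx (by linarith : x < x + 1)
    linarith

theorem linSurprisal_nonneg (α : ℝ) (h0 : 0 < α) (h1 : α ≤ 1) :
    (1 ≤ 4 * α ^ α / (α + 1) ^ (α + 1) ∧
        (4 * α ^ α / (α + 1) ^ (α + 1) = 1 ↔ α = 1)) ∧
      0 ≤ (1 / 2) * Real.logb 2 (4 * α ^ α / (α + 1) ^ (α + 1)) ∧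
      ((1 / 2) * Real.logb 2 (4 * α ^ α / (α + 1) ^ (α + 1)) = 0 ↔ α = 1) := by
  have hαpow : (0:ℝ) < α ^ α := Real.rpow_pos_of_pos h0 _
  have hβpow : (0:ℝ) < (α + 1) ^ (α + 1) := Real.rpow_pos_of_pos (by linarith) _
  set F := 4 * α ^ α / (α + 1) ^ (α + 1) with hF
  have hFpos : 0 < F := by positivity
  have hlogF : Real.log F = gLin α := by
    rw [hF, Real.log_div (by positivity) (ne_of_gt hβpow),
      Real.log_mul (by norm_num) (ne_of_gt hαpow),
      Real.log_rpow h0, Real.log_rpow (by linarith : (0:ℝ) < α + 1),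
      show (4:ℝ) = 2 ^ 2 by norm_num, Real.log_pow, gLin]
    push_cast; ring
  have hg1 : gLin 1 = 0 := by
    simp [gLin]
    rw [show (1:ℝ) + 1 = 2 by norm_num]
    ring
  have hgnn : 0 ≤ gLin α := by
    rcases eq_or_lt_of_le h1 with h | h
    · rw [h, hg1]
    · have := gLin_anti (Set.mem_Ioi.mpr h0) (Set.mem_Ioi.mpr one_pos) h
      rw [hg1] at this; linarith
  have hgeq : gLin α = 0 ↔ α = 1 := by
    constructor
    · intro hz
      by_contra hne
      have h : α < 1 := lt_of_le_of_ne h1 hne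
      have := gLin_anti (Set.mem_Ioi.mpr h0) (Set.mem_Ioi.mpr one_pos) h
      rw [hg1] at this; linarith
    · intro h; rw [h, hg1]
  have hlognn : 0 ≤ Real.log F := hlogF ▸ hgnn
  have hF1 : 1 ≤ F := (Real.log_nonneg_iff hFpos).mp hlognn
  have hlog0 : Real.log F = 0 ↔ F = 1 := by
    constructor
    · intro h
      rcases Real.log_eq_zero.mp h with h | h | h
      · exact absurd h (ne_of_gt hFpos)
      · exact h
      · linarith
    · intro h; rw [h, Real.log_one]
  have hFeq : F = 1 ↔ α = 1 := by rw [← hlog0, hlogF, hgeq]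
  have hlogbeq : Real.logb 2 F = Real.log F / Real.log 2 := rfl
  have hlog2 : 0 < Real.log 2 := Real.log_pos (by norm_num)
  refine ⟨⟨hF1, hFeq⟩, ?_, ?_⟩
  · rw [hlogbeq]; positivity
  · rw [hlogbeq, ← hFeq, ← hlog0]
    constructor
    · intro h
      have : Real.log F / Real.log 2 = 0 := by linarith
      exact (div_eq_zero_iff.mp this).resolve_right (ne_of_gt hlog2)
    · intro h; rw [h]; simp
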